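/- Let δ > 0, N ≥ 1, let w₁, …, w_N be positive real numbers, and let I₁, …, I_N : ℝ → ℝ be continuous functions such that for each i: Iᵢ(−v) = −Iᵢ(v) for |v| ≤ δ and Iᵢ(v) ≥ 0 for v ∈ [0,δ]; and assume that 2·∑_{i=1}^N wᵢ ∫₀^v Iᵢ(s) ds ≥ ∑_{i=1}^N wᵢ·Iᵢ(v)·v for all |v| ≤ δ. Then 2·∑_{i=1}^N wᵢ ∫₀^v m(s)·Iᵢ(s) ds ≥ ∑_{i=1}^N wᵢ·m(v)·Iᵢ(v)·v for every v ∈ ℝ. -/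

import Mathlib

open Set MeasureTheory Real

theorem stmt4
    (δ : ℝ) (hδ : 0 < δ)
    (N : ℕ) (hN : 1 ≤ N)
    (w : Fin N → ℝ) (hw : ∀ i, 0 < w i)
    (I : Fin N → ℝ → ℝ) (hI_cont : ∀ i, Continuous (I i))
    (hI_odd : ∀ i, ∀ v : ℝ, |v| ≤ δ → I i (-v) = - I i v)
    (hI_nonneg : ∀ i, ∀ v ∈ Icc (0:ℝ) δ, 0 ≤ I i v)
    (hI_ineq : ∀ v : ℝ, |v| ≤ δ →
      (∑ i, w i * (I i v) * v) ≤ 2 * ∑ i, w i * ∫ s in (0:ℝ)..v, I i s)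
    (m : ℝ → ℝ) (hm : ContDiff ℝ 1 m)
    (hm_even : ∀ s : ℝ, m (-s) = m s)
    (hm_range : ∀ s : ℝ, m s ∈ Icc (0:ℝ) 1)
    (hm_one : ∀ s : ℝ, |s| ≤ δ/2 → m s = 1)
    (hm_zero : ∀ s : ℝ, δ ≤ |s| → m s = 0)
    (hm_sign : ∀ s : ℝ, s * deriv m s ≤ 0)
    (hm_anti : StrictAntiOn m (Ioo (δ/2) δ)) :
    ∀ v : ℝ, (∑ i, w i * (m v * I i v) * v)
      ≤ 2 * ∑ i, w i * ∫ s in (0:ℝ)..v, m s * I i s := by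
  have hm_cont : Continuous m := hm.continuous
  have hm_diff : Differentiable ℝ m := hm.differentiable one_ne_zero
  -- m·Iᵢ is odd everywhere
  have hg_odd : ∀ i (s : ℝ), m (-s) * I i (-s) = -(m s * I i s) := by
    intro i s
    by_cases h : |s| ≤ δ
    · rw [hm_even, hI_odd i s h]; ring
    · push_neg at h
      rw [hm_zero s h.le, hm_zero (-s) (by rw [abs_neg]; exact h.le)]
      ring
  have hg_cont : ∀ i, Continuous (fun s => m s * I i s) :=
    fun i => hm_cont.mul (hI_cont i)
  -- integral symmetry
  have hint : ∀ i (v : ℝ), (∫ s in (0:ℝ)..(-v), m s * I i s)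
      = ∫ s in (0:ℝ)..v, m s * I i s := by
    intro i v
    have h1 : (∫ s in (-v)..(-(0:ℝ)), m s * I i s)
        = ∫ s in (0:ℝ)..v, m (-s) * I i (-s) :=
      (intervalIntegral.integral_comp_neg (fun s => m s * I i s)).symm
    have h2 : (∫ s in (0:ℝ)..v, m (-s) * I i (-s))
        = -∫ s in (0:ℝ)..v, m s * I i s := by
      rw [← intervalIntegral.integral_neg]
      exact intervalIntegral.integral_congr (fun s _ => hg_odd i s)
    have h3 : (∫ s in (-v)..(-(0:ℝ)), m s * I i s)
        = -∫ s in (0:ℝ)..(-v), m s * I i s := by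
      rw [neg_zero, intervalIntegral.integral_symm]
    rw [h3, h2] at h1
    linarith
  -- m is antitone on [0,∞)
  have hm_anti' : AntitoneOn m (Ici (0:ℝ)) := by
    apply antitoneOn_of_deriv_nonpos (convex_Ici 0) (hm_cont.continuousOn)
    · exact fun s _ => (hm_diff s).differentiableWithinAt
    · intro s hs
      rw [interior_Ici] at hs
      nlinarith [hm_sign s, hs.out]
  -- the key claim for v ≥ 0
  have key : ∀ v : ℝ, 0 ≤ v → (∑ i, w i * (m v * I i v) * v)
      ≤ 2 * ∑ i, w i * ∫ s in (0:ℝ)..v, m s * I i s := by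
    intro v hv
    rcases le_or_gt v δ with hvδ | hvδ
    · -- 0 ≤ v ≤ δ
      have habs : |v| ≤ δ := by rw [abs_of_nonneg hv]; exact hvδ
      have hmv0 : 0 ≤ m v := (hm_range v).1
      have hstep : ∀ i : Fin N,
          m v * ∫ s in (0:ℝ)..v, I i s ≤ ∫ s in (0:ℝ)..v, m s * I i s := by
        intro i
        rw [← intervalIntegral.integral_const_mul]
        apply intervalIntegral.integral_mono_on hv
          (((continuous_const.mul (hI_cont i))).intervalIntegrable 0 v)
          ((hg_cont i).intervalIntegrable 0 v)
        intro s hs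
        have hs0 : (0:ℝ) ≤ s := hs.1
        have hsv : s ≤ v := hs.2
        have hIs : 0 ≤ I i s := hI_nonneg i s ⟨hs0, hsv.trans hvδ⟩
        have hms : m v ≤ m s := hm_anti' hs0 (hs0.trans hsv) hsv
        exact mul_le_mul_of_nonneg_right hms hIs
      calc (∑ i, w i * (m v * I i v) * v)
          = m v * ∑ i, w i * I i v * v := by rw [Finset.mul_sum]; congr 1; ext i; ring
        _ ≤ m v * (2 * ∑ i, w i * ∫ s in (0:ℝ)..v, I i s) :=
            mul_le_mul_of_nonneg_left (hI_ineq v habs) hmv0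
        _ = 2 * ∑ i, w i * (m v * ∫ s in (0:ℝ)..v, I i s) := by
            rw [Finset.mul_sum, Finset.mul_sum, Finset.mul_sum]
            congr 1; ext i; ring
        _ ≤ 2 * ∑ i, w i * ∫ s in (0:ℝ)..v, m s * I i s := by
            apply mul_le_mul_of_nonneg_left _ (by norm_num : (0:ℝ) ≤ 2)
            apply Finset.sum_le_sum
            intro i _
            exact mul_le_mul_of_nonneg_left (hstep i) (hw i).le
    · -- v > δ
      have hmv : m v = 0 := hm_zero v (by rw [abs_of_nonneg hv]; exact hvδ.le)
      have hLHS : (∑ i, w i * (m v * I i v) * v) = 0 := by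
        apply Finset.sum_eq_zero; intro i _; rw [hmv]; ring
      rw [hLHS]
      have hsplit : ∀ i : Fin N, (∫ s in (0:ℝ)..v, m s * I i s)
          = ∫ s in (0:ℝ)..δ, m s * I i s := by
        intro i
        have hz : (∫ s in δ..v, m s * I i s) = 0 := by
          rw [← intervalIntegral.integral_zero (a := δ) (b := v) (μ := volume)]
          apply intervalIntegral.integral_congr
          intro s hs
          rw [uIcc_of_le hvδ.le] at hs
          have : δ ≤ |s| := by rw [abs_of_nonneg (hδ.le.trans hs.1)]; exact hs.1
          show m s * I i s = 0
          rw [hm_zero s this]; ring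
        have := intervalIntegral.integral_add_adjacent_intervals
          ((hg_cont i).intervalIntegrable (μ := volume) 0 δ) ((hg_cont i).intervalIntegrable (μ := volume) δ v)
        rw [hz] at this; linarith [this.symm]
      have : 0 ≤ 2 * ∑ i, w i * ∫ s in (0:ℝ)..δ, m s * I i s := by
        apply mul_nonneg (by norm_num)
        apply Finset.sum_nonneg
        intro i _
        apply mul_nonneg (hw i).le
        apply intervalIntegral.integral_nonneg hδ.le
        intro s hs
        exact mul_nonneg (hm_range s).1 (hI_nonneg i s hs)
      calc (0:ℝ) ≤ 2 * ∑ i, w i * ∫ s in (0:ℝ)..δ, m s * I i s := this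
        _ = 2 * ∑ i, w i * ∫ s in (0:ℝ)..v, m s * I i s := by
            congr 1; apply Finset.sum_congr rfl; intro i _; rw [hsplit i]
  intro v
  rcases le_or_gt 0 v with hv | hv
  · exact key v hv
  · have h := key (-v) (by linarith)
    have hL : (∑ i, w i * (m (-v) * I i (-v)) * (-v))
        = ∑ i, w i * (m v * I i v) * v := by
      apply Finset.sum_congr rfl; intro i _
      rw [hg_odd i v]; ring
    have hR : (∑ i, w i * ∫ s in (0:ℝ)..(-v), m s * I i s)
        = ∑ i, w i * ∫ s in (0:ℝ)..v, m s * I i s := by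
      apply Finset.sum_congr rfl; intro i _; rw [hint i v]
    rw [hL, hR] at h
    exact h
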